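/- For any tensor X ∈ ℂ^{n1×n2×n3}, the tensor tubal rank satisfies rank_t(X) ≤ min{rank(X_(1)), rank(X_(2))}, where X_(1) and X_(2) are the mode-1 and mode-2 matricizations of X. -/

import Mathlib

open Complex Matrix BigOperators Kronecker

noncomputable section

/-- DFT along the third mode, applied slice-wise. -/
def dft {n1 n2 n3 : ℕ} (X : Fin n3 → Matrix (Fin n1) (Fin n2) ℂ) :
    Fin n3 → Matrix (Fin n1) (Fin n2) ℂ :=
  fun k => ∑ j : Fin n3,
    Complex.exp (-2 * (Real.pi : ℂ) * Complex.I * ((k : ℕ) : ℂ) * ((j : ℕ) : ℂ) / (n3 : ℂ)) • X j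

/-- Block circulant matrix of a third-order tensor. -/
def bcirc {n1 n2 n3 : ℕ} (X : Fin n3 → Matrix (Fin n1) (Fin n2) ℂ) :
    Matrix (Fin n3 × Fin n1) (Fin n3 × Fin n2) ℂ :=
  Matrix.of fun p q => X (p.1 - q.1) p.2 q.2

/-- Vertical stacking of the frontal slices. -/
def bvec {n2 n4 n3 : ℕ} (Y : Fin n3 → Matrix (Fin n2) (Fin n4) ℂ) :
    Matrix (Fin n3 × Fin n2) (Fin n4) ℂ :=
  Matrix.of fun p c => Y p.1 p.2 c

/-- t-product of third-order tensors, defined via bvfold(bcirc(X)·bvec(Y)). -/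
def tMul {n1 n2 n4 n3 : ℕ} (X : Fin n3 → Matrix (Fin n1) (Fin n2) ℂ)
    (Y : Fin n3 → Matrix (Fin n2) (Fin n4) ℂ) :
    Fin n3 → Matrix (Fin n1) (Fin n4) ℂ :=
  fun k => Matrix.of fun a c => (bcirc X * bvec Y) (k, a) c

/-- Tensor conjugate transpose: conjugate-transpose each frontal slice and
reverse the order of slices 2 through n3. -/
def tH {n1 n2 n3 : ℕ} (X : Fin n3 → Matrix (Fin n1) (Fin n2) ℂ) :
    Fin n3 → Matrix (Fin n2) (Fin n1) ℂ :=
  fun k => (X (-k))ᴴ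

/-- Identity tensor: first frontal slice the identity matrix, others zero. -/
def tId (n1 n3 : ℕ) : Fin n3 → Matrix (Fin n1) (Fin n1) ℂ :=
  fun k => if (k : ℕ) = 0 then 1 else 0

/-- Frobenius norm of a third-order tensor. -/
def fro {n1 n2 n3 : ℕ} (X : Fin n3 → Matrix (Fin n1) (Fin n2) ℂ) : ℝ :=
  Real.sqrt (∑ k, ∑ i, ∑ j, ‖X k i j‖ ^ 2)

/-- Squared Frobenius norm of a matrix. -/
def mFrobSq {m n : ℕ} (A : Matrix (Fin m) (Fin n) ℂ) : ℝ :=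
  ∑ i, ∑ j, ‖A i j‖ ^ 2

/-- Tubal rank: maximal rank of the Fourier-domain frontal slices. -/
def tubalRank {n1 n2 n3 : ℕ} (X : Fin n3 → Matrix (Fin n1) (Fin n2) ℂ) : ℕ :=
  Finset.univ.sup fun k => (dft X k).rank

/-- Mode-1 matricization. -/
def mode1 {n1 n2 n3 : ℕ} (X : Fin n3 → Matrix (Fin n1) (Fin n2) ℂ) :
    Matrix (Fin n1) (Fin n2 × Fin n3) ℂ :=
  Matrix.of fun i p => X p.2 i p.1

/-- Mode-2 matricization. -/
def mode2 {n1 n2 n3 : ℕ} (X : Fin n3 → Matrix (Fin n1) (Fin n2) ℂ) :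
    Matrix (Fin n2) (Fin n1 × Fin n3) ℂ :=
  Matrix.of fun j p => X p.2 p.1 j

/-- The n×n discrete Fourier matrix. -/
def dftMatrix (n : ℕ) : Matrix (Fin n) (Fin n) ℂ :=
  Matrix.of fun j k =>
    Complex.exp (-2 * (Real.pi : ℂ) * Complex.I * ((j : ℕ) : ℂ) * ((k : ℕ) : ℂ) / (n : ℂ))


lemma dft_rank_le_mode1 {n1 n2 n3 : ℕ} (X : Fin n3 → Matrix (Fin n1) (Fin n2) ℂ) (k : Fin n3) :
    (dft X k).rank ≤ (mode1 X).rank := by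
  set c : Fin n3 → ℂ := fun j =>
    Complex.exp (-2 * (Real.pi : ℂ) * Complex.I * ((k : ℕ) : ℂ) * ((j : ℕ) : ℂ) / (n3 : ℂ))
  have h : dft X k = mode1 X * (Matrix.of fun (p : Fin n2 × Fin n3) (j : Fin n2) =>
      if p.1 = j then c p.2 else 0) := by
    ext i j
    simp only [dft, Matrix.sum_apply, Matrix.smul_apply, Matrix.mul_apply, mode1,
      Matrix.of_apply, smul_eq_mul, Fintype.sum_prod_type]
    rw [Finset.sum_comm]
    refine Finset.sum_congr rfl fun l _ => ?_
    simp [mul_comm]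
    left
    simp only [c]
    congr 1
    ring
  rw [h]
  exact Matrix.rank_mul_le_left _ _

lemma dft_rank_le_mode2 {n1 n2 n3 : ℕ} (X : Fin n3 → Matrix (Fin n1) (Fin n2) ℂ) (k : Fin n3) :
    (dft X k).rank ≤ (mode2 X).rank := by
  set c : Fin n3 → ℂ := fun j =>
    Complex.exp (-2 * (Real.pi : ℂ) * Complex.I * ((k : ℕ) : ℂ) * ((j : ℕ) : ℂ) / (n3 : ℂ))
  have h : dft X k = (Matrix.of fun (i : Fin n1) (p : Fin n1 × Fin n3) =>
      if p.1 = i then c p.2 else 0) * (mode2 X)ᵀ := by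
    ext i j
    simp only [dft, Matrix.sum_apply, Matrix.smul_apply, Matrix.mul_apply, mode2,
      Matrix.transpose_apply, Matrix.of_apply, smul_eq_mul, Fintype.sum_prod_type]
    rw [Finset.sum_comm]
    refine Finset.sum_congr rfl fun l _ => ?_
    simp
    left
    simp only [c]
    congr 1
    ring
  rw [h]
  calc (_ * (mode2 X)ᵀ).rank ≤ (mode2 X)ᵀ.rank := Matrix.rank_mul_le_right _ _
    _ = (mode2 X).rank := Matrix.rank_transpose _

theorem tubalRank_le_tucker {n1 n2 n3 : ℕ} (X : Fin n3 → Matrix (Fin n1) (Fin n2) ℂ) :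
    tubalRank X ≤ min (mode1 X).rank (mode2 X).rank := by
  refine Finset.sup_le fun k _ => le_min (dft_rank_le_mode1 X k) (dft_rank_le_mode2 X k)
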